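/- For a 2-layer internally triangulated layered graph, there is always a layer whose first (leftmost) vertex is a fan, while the first vertex of the opposite layer is a T-vertex. -/
import Mathlib


/-- For a 2-layer internally triangulated layered graph (with at least three
vertices in total), there is always a layer whose first (leftmost) vertex is a fan
(at least two neighbors in the opposite row), while the first vertex of the opposite layer
is a T-vertex (exactly one neighbor in the opposite row).

The cross edges are modeled by a relation `A : Fin n → Fin m → Prop` between the two rows,
satisfying: every vertex has a neighbor in the opposite row, neighborhoods are intervals,
edges do not cross (planarity), the two leftmost vertices are adjacent, and consecutive
vertices of a row share a common neighbor (internal triangulation). -/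
theorem stmt8 (n m : ℕ) (hn : 0 < n) (hm : 0 < m) (hsize : 3 ≤ n + m)
    (A : Fin n → Fin m → Prop)
    (hA00 : A ⟨0, hn⟩ ⟨0, hm⟩)
    (hnonempty₀ : ∀ j, ∃ i, A j i)
    (hnonempty₁ : ∀ i, ∃ j, A j i)
    (hinterval₀ : ∀ j (i₁ i₂ i : Fin m), A j i₁ → A j i₂ → i₁ ≤ i → i ≤ i₂ → A j i)
    (hinterval₁ : ∀ i (j₁ j₂ j : Fin n), A j₁ i → A j₂ i → j₁ ≤ j → j ≤ j₂ → A j i)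
    (hnocross : ∀ (j j' : Fin n) (i i' : Fin m), j < j' → i' < i → ¬ (A j i ∧ A j' i'))
    (htri₀ : ∀ (j : Fin n) (h : (j : ℕ) + 1 < n), ∃ i, A j i ∧ A ⟨(j : ℕ) + 1, h⟩ i)
    (htri₁ : ∀ (i : Fin m) (h : (i : ℕ) + 1 < m), ∃ j, A j i ∧ A j ⟨(i : ℕ) + 1, h⟩) :
    (2 ≤ Nat.card {i : Fin m // A ⟨0, hn⟩ i} ∧ Nat.card {j : Fin n // A j ⟨0, hm⟩} = 1) ∨
    (Nat.card {i : Fin m // A ⟨0, hn⟩ i} = 1 ∧ 2 ≤ Nat.card {j : Fin n // A j ⟨0, hm⟩}) := by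

  classical
  set S := {i : Fin m // A ⟨0, hn⟩ i}
  set T := {j : Fin n // A j ⟨0, hm⟩}
  have hSne : Nonempty S := ⟨⟨⟨0, hm⟩, hA00⟩⟩
  have hTne : Nonempty T := ⟨⟨⟨0, hn⟩, hA00⟩⟩
  have hSpos : 0 < Nat.card S := Nat.card_pos
  have hTpos : 0 < Nat.card T := Nat.card_pos
  -- Not both can be ≥ 2
  have hnotboth : ¬ (2 ≤ Nat.card S ∧ 2 ≤ Nat.card T) := by
    rintro ⟨hS, hT⟩
    have hSnt : Nontrivial S := Finite.one_lt_card_iff_nontrivial.mp hS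
    have hTnt : Nontrivial T := Finite.one_lt_card_iff_nontrivial.mp hT
    obtain ⟨i, hi⟩ := exists_ne (⟨⟨0, hm⟩, hA00⟩ : S)
    obtain ⟨j, hj⟩ := exists_ne (⟨⟨0, hn⟩, hA00⟩ : T)
    have hipos : (⟨0, hm⟩ : Fin m) < i.1 := by
      rcases Nat.eq_zero_or_pos (i.1 : ℕ) with h | h
      · exact absurd (Subtype.ext (Fin.ext h)) hi
      · exact h
    have hjpos : (⟨0, hn⟩ : Fin n) < j.1 := by
      rcases Nat.eq_zero_or_pos (j.1 : ℕ) with h | h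
      · exact absurd (Subtype.ext (Fin.ext h)) hj
      · exact h
    exact hnocross ⟨0, hn⟩ j.1 i.1 ⟨0, hm⟩ hjpos hipos ⟨i.2, j.2⟩
  -- Not both can be = 1
  have hnotone : ¬ (Nat.card S = 1 ∧ Nat.card T = 1) := by
    rintro ⟨hS, hT⟩
    have hSsub : Subsingleton S := (Nat.card_eq_one_iff_unique.mp hS).1
    have hTsub : Subsingleton T := (Nat.card_eq_one_iff_unique.mp hT).1
    rcases Nat.lt_or_ge n 2 with hn2 | hn2
    · have hm2 : 2 ≤ m := by omega
      have h1 : (0 : ℕ) + 1 < m := by omega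
      obtain ⟨j, hj0, hj1⟩ := htri₁ ⟨0, hm⟩ h1
      have hj : j = ⟨0, hn⟩ := by
        have := hTsub.elim (⟨j, hj0⟩ : T) ⟨⟨0, hn⟩, hA00⟩
        exact congrArg Subtype.val this
      rw [hj] at hj1
      have := hSsub.elim (⟨⟨1, h1⟩, hj1⟩ : S) ⟨⟨0, hm⟩, hA00⟩
      have := congrArg (fun x : S => (x.1 : ℕ)) this
      simp at this
    · have h1 : (0 : ℕ) + 1 < n := by omega
      obtain ⟨i, hi0, hi1⟩ := htri₀ ⟨0, hn⟩ h1
      have hi : i = ⟨0, hm⟩ := by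
        have := hSsub.elim (⟨i, hi0⟩ : S) ⟨⟨0, hm⟩, hA00⟩
        exact congrArg Subtype.val this
      rw [hi] at hi1
      have := hTsub.elim (⟨⟨1, h1⟩, hi1⟩ : T) ⟨⟨0, hn⟩, hA00⟩
      have := congrArg (fun x : T => (x.1 : ℕ)) this
      simp at this
  omega
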